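/- Let n, k, m be positive integers with n ≥ km. If the family {F_1, ..., F_m} of k-graphs on the common vertex set [n] does not admit a rainbow matching, then there exists a stable family {F_1', ..., F_m'} of k-graphs on the vertex set [n] with |F_i| = |F_i'| for all i ∈ [m] that also does not admit a rainbow matching. -/

import Mathlib

open Finset

/-- `f(n,m,k) = max{C(n,k) - C(n-m+1,k), C(km-1,k)}`. -/
def fEMC (n m k : ℕ) : ℕ :=
  max (Nat.choose n k - Nat.choose (n - m + 1) k) (Nat.choose (k * m - 1) k)

/-- `F` is a `k`-graph on the vertex set `[n] = {1,…,n}`. -/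
def IsKGraphOn (n k : ℕ) (F : Finset (Finset ℕ)) : Prop :=
  ∀ e ∈ F, e ⊆ Finset.Icc 1 n ∧ e.card = k

/-- The family `F = (F_1,…,F_m)` admits a rainbow matching. -/
def HasRainbowMatching {m : ℕ} (F : Fin m → Finset (Finset ℕ)) : Prop :=
  ∃ e : Fin m → Finset ℕ, (∀ i, e i ∈ F i) ∧
    ∀ i j : Fin m, i ≠ j → Disjoint (e i) (e j)

/-- Degree of a vertex `v` in the hypergraph `F`. -/
def degOf (F : Finset (Finset ℕ)) (v : ℕ) : ℕ := (F.filter (fun e => v ∈ e)).card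

/-- The family `F` of `k`-graphs on `[n]` is saturated. -/
def Saturated (n k : ℕ) {m : ℕ} (F : Fin m → Finset (Finset ℕ)) : Prop :=
  ¬ HasRainbowMatching F ∧
    ∀ (i : Fin m) (e : Finset ℕ), e ⊆ Finset.Icc 1 n → e.card = k → e ∉ F i →
      HasRainbowMatching (Function.update F i (insert e (F i)))

/-- Elementwise domination order: the increasing enumeration of `e` is
pointwise at most that of `f` (this forces `e.card = f.card`). -/
def DomLE (e f : Finset ℕ) : Prop :=
  List.Forall₂ (· ≤ ·) (e.sort (· ≤ ·)) (f.sort (· ≤ ·))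

/-- `F` is a stable hypergraph on vertex set `[n]`. -/
def StableGraph (n : ℕ) (F : Finset (Finset ℕ)) : Prop :=
  ∀ e f : Finset ℕ, e ⊆ Finset.Icc 1 n → DomLE e f → f ∈ F → e ∈ F

/-- `S(n,m,k)`: all `k`-subsets of `[n]` meeting `[m-1]`. -/
def SGraph (n m k : ℕ) : Finset (Finset ℕ) :=
  ((Finset.Icc 1 n).powersetCard k).filter (fun e => (e ∩ Finset.Icc 1 (m - 1)).Nonempty)

/-- `D(n,m,k)`: all `k`-subsets of `[km-1]`. -/
def DGraph (n m k : ℕ) : Finset (Finset ℕ) :=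
  (Finset.Icc 1 (k * m - 1)).powersetCard k

/-- `H(F)`: the `(k+1)`-graph on `[n] ∪ {v_1,…,v_m}`, where `v_i` is encoded
as the natural number `n + i`, with edges `e ∪ {v_i}` for `e ∈ F_i`. -/
def HF (n : ℕ) {m : ℕ} (F : Fin m → Finset (Finset ℕ)) : Finset (Finset ℕ) :=
  Finset.univ.biUnion (fun i : Fin m => (F i).image (fun e => insert (n + i.1 + 1) e))

/-- `H_S(n,m,k) = H(F)` with every `F_i = S(n,m,k)`. -/
def HS (n m k : ℕ) : Finset (Finset ℕ) := HF n (fun _ : Fin m => SGraph n m k)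

/-- `H_D(n,m,k) = H(F)` with every `F_i = D(n,m,k)`. -/
def HD (n m k : ℕ) : Finset (Finset ℕ) := HF n (fun _ : Fin m => DGraph n m k)

/-- `H*(F)`: `H(F)` together with the edges `e ∪ {u_j}`, `e` a `k`-subset of `[n]`,
`j ∈ [r]`, `r = ⌊n/k⌋ - m`, where `u_j` is encoded as the natural number `n + m + j`. -/
def HstarF (n k : ℕ) {m : ℕ} (F : Fin m → Finset (Finset ℕ)) : Finset (Finset ℕ) :=
  HF n F ∪ Finset.univ.biUnion (fun j : Fin (n / k - m) =>
    ((Finset.Icc 1 n).powersetCard k).image (fun e => insert (n + m + j.1 + 1) e))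

/-- A set of edges is a matching if its edges are pairwise disjoint. -/
def IsMatching (M : Finset (Finset ℕ)) : Prop :=
  ∀ e ∈ M, ∀ f ∈ M, e ≠ f → Disjoint e f

/-- `H₂` is `ε`-close to `H₁` (as `u`-graphs on a vertex set of size `N`):
`|E(H₁) \ E(H₂)| ≤ ε · N^u`. -/
def IsEpsClose (ε : ℝ) (N u : ℕ) (H₁ H₂ : Finset (Finset ℕ)) : Prop :=
  (((H₁ \ H₂).card : ℝ)) ≤ ε * (N : ℝ) ^ u


/-! ### Auxiliary machinery: compressions (shifting) -/

/-- Shift an edge: replace `v` by `u` if possible. -/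
def shiftE (u v : ℕ) (e : Finset ℕ) : Finset ℕ :=
  if v ∈ e ∧ u ∉ e then insert u (e.erase v) else e

/-- The `(u,v)`-compression of a hypergraph. -/
def compUV (u v : ℕ) (G : Finset (Finset ℕ)) : Finset (Finset ℕ) :=
  G.filter (fun e => shiftE u v e ∈ G) ∪
    (G.filter (fun e => shiftE u v e ∉ G)).image (shiftE u v)

/-- weight of a hypergraph -/
def wtG (G : Finset (Finset ℕ)) : ℕ := ∑ e ∈ G, ∑ x ∈ e, x

lemma shiftE_of_mem {u v : ℕ} {e : Finset ℕ} (hv : v ∈ e) (hu : u ∉ e) :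
    shiftE u v e = insert u (e.erase v) := by simp [shiftE, hv, hu]

lemma shiftE_ne_iff {u v : ℕ} {e : Finset ℕ} :
    shiftE u v e ≠ e ↔ v ∈ e ∧ u ∉ e ∧ u ≠ v := by
  unfold shiftE
  split
  · rename_i h
    obtain ⟨hv, hu⟩ := h
    constructor
    · intro hne
      refine ⟨hv, hu, ?_⟩
      rintro rfl; exact hne (Finset.insert_erase hv)
    · rintro ⟨-, -, huv⟩ heq
      apply hu; rw [← heq]; exact Finset.mem_insert_self _ _
  · rename_i h
    simp only [ne_eq, not_true_eq_false, false_iff, not_and, not_not]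
    intro hv hu
    exact absurd ⟨hv, hu⟩ h

lemma mem_compUV {u v : ℕ} {G : Finset (Finset ℕ)} {x : Finset ℕ} :
    x ∈ compUV u v G ↔ (x ∈ G ∧ shiftE u v x ∈ G) ∨
      (∃ g ∈ G, shiftE u v g ∉ G ∧ x = shiftE u v g) := by
  simp only [compUV, Finset.mem_union, Finset.mem_filter, Finset.mem_image]
  constructor
  · rintro (⟨h1, h2⟩ | ⟨g, ⟨hg1, hg2⟩, rfl⟩)
    · exact Or.inl ⟨h1, h2⟩
    · exact Or.inr ⟨g, hg1, hg2, rfl⟩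
  · rintro (⟨h1, h2⟩ | ⟨g, hg1, hg2, rfl⟩)
    · exact Or.inl ⟨h1, h2⟩
    · exact Or.inr ⟨g, ⟨hg1, hg2⟩, rfl⟩

lemma shiftE_injOn (u v : ℕ) (G : Finset (Finset ℕ)) :
    Set.InjOn (shiftE u v) (G.filter (fun e => shiftE u v e ∉ G)) := by
  intro a ha b hb hab
  simp only [Finset.coe_filter, Set.mem_setOf_eq] at ha hb
  have ha' : shiftE u v a ≠ a := fun h => ha.2 (by rw [h]; exact ha.1)
  have hb' : shiftE u v b ≠ b := fun h => hb.2 (by rw [h]; exact hb.1)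
  obtain ⟨hva, hua, huva⟩ := shiftE_ne_iff.1 ha'
  obtain ⟨hvb, hub, -⟩ := shiftE_ne_iff.1 hb'
  rw [shiftE_of_mem hva hua, shiftE_of_mem hvb hub] at hab
  have h1 : u ∉ a.erase v := fun h => hua (Finset.mem_of_mem_erase h)
  have h2 : u ∉ b.erase v := fun h => hub (Finset.mem_of_mem_erase h)
  have heq : a.erase v = b.erase v := by
    have := congrArg (fun s => Finset.erase s u) hab
    simpa [Finset.erase_insert h1, Finset.erase_insert h2] using this
  have := congrArg (insert v) heq
  rwa [Finset.insert_erase hva, Finset.insert_erase hvb] at this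

lemma compUV_disjoint_parts (u v : ℕ) (G : Finset (Finset ℕ)) :
    Disjoint (G.filter (fun e => shiftE u v e ∈ G))
      ((G.filter (fun e => shiftE u v e ∉ G)).image (shiftE u v)) := by
  rw [Finset.disjoint_left]
  rintro a ha hb
  obtain ⟨g, hg, rfl⟩ := Finset.mem_image.1 hb
  exact (Finset.mem_filter.1 hg).2 (Finset.mem_filter.1 ha).1

lemma card_compUV (u v : ℕ) (G : Finset (Finset ℕ)) :
    (compUV u v G).card = G.card := by
  rw [compUV, Finset.card_union_of_disjoint (compUV_disjoint_parts u v G),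
    Finset.card_image_of_injOn (shiftE_injOn u v G),
    ← Finset.card_union_of_disjoint (Finset.disjoint_filter_filter_not G G _),
    Finset.filter_union_filter_not_eq]

lemma kgraph_compUV {n k u v : ℕ} {G : Finset (Finset ℕ)} (hu1 : 1 ≤ u) (hun : u ≤ n)
    (hG : IsKGraphOn n k G) : IsKGraphOn n k (compUV u v G) := by
  intro x hx
  rcases mem_compUV.1 hx with ⟨h1, -⟩ | ⟨g, hg, -, rfl⟩
  · exact hG x h1
  · by_cases hc : v ∈ g ∧ u ∉ g
    · rw [shiftE_of_mem hc.1 hc.2]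
      obtain ⟨hsub, hcard⟩ := hG g hg
      have hue : u ∉ g.erase v := fun h => hc.2 (Finset.mem_of_mem_erase h)
      constructor
      · intro x hx
        rcases Finset.mem_insert.1 hx with rfl | hx
        · exact Finset.mem_Icc.2 ⟨hu1, hun⟩
        · exact hsub (Finset.mem_of_mem_erase hx)
      · rw [Finset.card_insert_of_notMem hue, Finset.card_erase_of_mem hc.1, hcard]
        have : 1 ≤ k := by
          rw [← hcard]; exact Finset.card_pos.2 ⟨v, hc.1⟩
        omega
    · rw [shiftE]; rw [if_neg hc]; exact hG g hg

lemma shiftE_sum_le {u v : ℕ} (huv : u ≤ v) (e : Finset ℕ) :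
    ∑ x ∈ shiftE u v e, x ≤ ∑ x ∈ e, x := by
  by_cases hc : v ∈ e ∧ u ∉ e
  · rw [shiftE_of_mem hc.1 hc.2]
    have hue : u ∉ e.erase v := fun h => hc.2 (Finset.mem_of_mem_erase h)
    rw [Finset.sum_insert hue]
    calc u + ∑ x ∈ e.erase v, x ≤ v + ∑ x ∈ e.erase v, x := by omega
    _ = ∑ x ∈ e, x := Finset.add_sum_erase _ (fun x => x) hc.1
  · rw [shiftE, if_neg hc]

lemma shiftE_sum_lt {u v : ℕ} (huv : u < v) {e : Finset ℕ} (hv : v ∈ e) (hu : u ∉ e) :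
    ∑ x ∈ shiftE u v e, x < ∑ x ∈ e, x := by
  rw [shiftE_of_mem hv hu]
  have hue : u ∉ e.erase v := fun h => hu (Finset.mem_of_mem_erase h)
  rw [Finset.sum_insert hue]
  calc u + ∑ x ∈ e.erase v, x < v + ∑ x ∈ e.erase v, x := by omega
  _ = ∑ x ∈ e, x := Finset.add_sum_erase _ (fun x => x) hv

lemma wtG_split (u v : ℕ) (G : Finset (Finset ℕ)) :
    wtG G = ∑ e ∈ G.filter (fun e => shiftE u v e ∈ G), ∑ x ∈ e, x
      + ∑ e ∈ G.filter (fun e => shiftE u v e ∉ G), ∑ x ∈ e, x := by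
  rw [wtG, ← Finset.sum_union (Finset.disjoint_filter_filter_not G G _),
    Finset.filter_union_filter_not_eq]

lemma wtG_compUV_le {u v : ℕ} (huv : u ≤ v) (G : Finset (Finset ℕ)) :
    wtG (compUV u v G) ≤ wtG G := by
  rw [wtG, compUV, Finset.sum_union (compUV_disjoint_parts u v G)]
  have h2 : ∑ e ∈ (G.filter (fun e => shiftE u v e ∉ G)).image (shiftE u v), ∑ x ∈ e, x
      ≤ ∑ e ∈ G.filter (fun e => shiftE u v e ∉ G), ∑ x ∈ e, x := by
    rw [Finset.sum_image (shiftE_injOn u v G)]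
    exact Finset.sum_le_sum (fun e _ => shiftE_sum_le huv e)
  have h3 := wtG_split u v G
  omega

lemma compUV_eq_of_filter_empty {u v : ℕ} {G : Finset (Finset ℕ)}
    (h : G.filter (fun e => shiftE u v e ∉ G) = ∅) : compUV u v G = G := by
  rw [compUV, h, Finset.image_empty, Finset.union_empty]
  rw [Finset.filter_eq_self]
  intro e he
  by_contra hne
  have : e ∈ G.filter (fun e => shiftE u v e ∉ G) := Finset.mem_filter.2 ⟨he, hne⟩
  simp [h] at this

lemma wtG_compUV_lt {u v : ℕ} (huv : u < v) {G : Finset (Finset ℕ)}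
    (hne : compUV u v G ≠ G) : wtG (compUV u v G) < wtG G := by
  have hfe : (G.filter (fun e => shiftE u v e ∉ G)).Nonempty := by
    rcases Finset.eq_empty_or_nonempty (G.filter (fun e => shiftE u v e ∉ G)) with h | h
    · exact absurd (compUV_eq_of_filter_empty h) hne
    · exact h
  rw [wtG, compUV, Finset.sum_union (compUV_disjoint_parts u v G)]
  have h2 : ∑ e ∈ (G.filter (fun e => shiftE u v e ∉ G)).image (shiftE u v), ∑ x ∈ e, x
      < ∑ e ∈ G.filter (fun e => shiftE u v e ∉ G), ∑ x ∈ e, x := by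
    rw [Finset.sum_image (shiftE_injOn u v G)]
    refine Finset.sum_lt_sum_of_nonempty hfe (fun e he => ?_)
    obtain ⟨heG, hes⟩ := Finset.mem_filter.1 he
    have : shiftE u v e ≠ e := fun h => hes (by rw [h]; exact heG)
    obtain ⟨hv, hu, -⟩ := shiftE_ne_iff.1 this
    exact shiftE_sum_lt huv hv hu
  have h3 := wtG_split u v G
  omega

lemma rainbow_of_compUV {m u v : ℕ} (huv : u ≠ v) (F : Fin m → Finset (Finset ℕ))
    (h : HasRainbowMatching (fun i => compUV u v (F i))) : HasRainbowMatching F := by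
  obtain ⟨e, hmem, hdisj⟩ := h
  by_cases hall : ∀ i, e i ∈ F i
  · exact ⟨e, hall, hdisj⟩
  push_neg at hall
  obtain ⟨i0, hi0⟩ := hall
  -- e i0 must be a genuinely shifted edge
  have hmem0 := mem_compUV.1 (hmem i0)
  have h0 : ∃ g ∈ F i0, shiftE u v g ∉ F i0 ∧ e i0 = shiftE u v g := by
    rcases hmem0 with ⟨h1, -⟩ | h2
    · exact absurd h1 hi0
    · exact h2
  obtain ⟨g0, hg0F, hg0s, hg0e⟩ := h0
  have hg0ne : shiftE u v g0 ≠ g0 := fun h => hg0s (by rw [h]; exact hg0F)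
  obtain ⟨hvg0, hug0, -⟩ := shiftE_ne_iff.1 hg0ne
  have he0 : e i0 = insert u (g0.erase v) := by rw [hg0e, shiftE_of_mem hvg0 hug0]
  have hue0 : u ∈ e i0 := by rw [he0]; exact Finset.mem_insert_self _ _
  have hve0 : v ∉ e i0 := by
    rw [he0]; simp only [Finset.mem_insert, Finset.mem_erase]
    rintro (rfl | ⟨h, -⟩) <;> simp_all
  -- g0 is contained in (e i0 \ {u}) ∪ {v}
  have hg0sub : ∀ x ∈ g0, x = v ∨ x ∈ e i0 := by
    intro x hx
    by_cases hxv : x = v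
    · exact Or.inl hxv
    · refine Or.inr ?_
      rw [he0]
      exact Finset.mem_insert_of_mem (Finset.mem_erase.2 ⟨hxv, hx⟩)
  -- every other color is in the original family and knows its shift
  have hother : ∀ i, i ≠ i0 → e i ∈ F i ∧ shiftE u v (e i) ∈ F i := by
    intro i hi
    have hu' : u ∉ e i := Finset.disjoint_left.1 (hdisj i0 i (Ne.symm hi)) hue0
    rcases mem_compUV.1 (hmem i) with h1 | ⟨g, hgF, hgs, hge⟩
    · exact h1
    · exfalso
      have hgne : shiftE u v g ≠ g := fun h => hgs (by rw [h]; exact hgF)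
      obtain ⟨hvg, hug, -⟩ := shiftE_ne_iff.1 hgne
      apply hu'
      rw [hge, shiftE_of_mem hvg hug]
      exact Finset.mem_insert_self _ _
  by_cases hvj : ∃ j, v ∈ e j
  · obtain ⟨j, hvj⟩ := hvj
    have hji0 : j ≠ i0 := fun h => hve0 (h ▸ hvj)
    have huej : u ∉ e j := Finset.disjoint_left.1 (hdisj i0 j (Ne.symm hji0)) hue0
    obtain ⟨hejF, hsjF⟩ := hother j hji0
    have hsj : shiftE u v (e j) = insert u ((e j).erase v) := shiftE_of_mem hvj huej
    have hval : ∀ a, (Function.update (Function.update e i0 g0) j (shiftE u v (e j)) a)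
        = if a = j then shiftE u v (e j) else if a = i0 then g0 else e a := by
      intro a
      by_cases h1 : a = j
      · subst h1; simp
      by_cases h2 : a = i0
      · subst h2
        rw [Function.update_of_ne h1, Function.update_self, if_neg h1, if_pos rfl]
      · rw [Function.update_of_ne h1, Function.update_of_ne h2, if_neg h1, if_neg h2]
    -- disjointness helper facts
    have d1 : Disjoint g0 (shiftE u v (e j)) := by
      rw [Finset.disjoint_left]
      intro x hx hx'
      rw [hsj] at hx'
      rcases Finset.mem_insert.1 hx' with rfl | hx'
      · exact hug0 hx
      · obtain ⟨hxv, hxe⟩ := Finset.mem_erase.1 hx'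
        rcases hg0sub x hx with rfl | hxe0
        · exact hxv rfl
        · exact Finset.disjoint_left.1 (hdisj i0 j (Ne.symm hji0)) hxe0 hxe
    have d2 : ∀ i, i ≠ i0 → i ≠ j → Disjoint g0 (e i) := by
      intro i h1 h2
      rw [Finset.disjoint_left]
      intro x hx hx'
      rcases hg0sub x hx with rfl | hxe0
      · exact Finset.disjoint_left.1 (hdisj j i (Ne.symm h2)) hvj hx'
      · exact Finset.disjoint_left.1 (hdisj i0 i (Ne.symm h1)) hxe0 hx'
    have d3 : ∀ i, i ≠ j → i ≠ i0 → Disjoint (shiftE u v (e j)) (e i) := by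
      intro i h1 h2
      rw [Finset.disjoint_left]
      intro x hx hx'
      rw [hsj] at hx
      rcases Finset.mem_insert.1 hx with rfl | hx
      · exact Finset.disjoint_left.1 (hdisj i0 i (Ne.symm h2)) hue0 hx'
      · exact Finset.disjoint_left.1 (hdisj j i (Ne.symm h1)) (Finset.mem_of_mem_erase hx) hx'
    refine ⟨Function.update (Function.update e i0 g0) j (shiftE u v (e j)), ?_, ?_⟩
    · intro i
      rw [hval]
      by_cases h1 : i = j
      · rw [if_pos h1, h1]; exact hsjF
      by_cases h2 : i = i0
      · rw [if_neg h1, if_pos h2, h2]; exact hg0F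
      · rw [if_neg h1, if_neg h2]; exact (hother i h2).1
    · intro i i' hii'
      rw [hval, hval]
      by_cases h1 : i = j
      · rw [if_pos h1]
        by_cases h3 : i' = j
        · exact absurd (h1.trans h3.symm) hii'
        rw [if_neg h3]
        by_cases h4 : i' = i0
        · rw [if_pos h4]; exact d1.symm
        · rw [if_neg h4]; exact d3 i' h3 h4
      rw [if_neg h1]
      by_cases h2 : i = i0
      · rw [if_pos h2]
        by_cases h3 : i' = j
        · rw [if_pos h3]; exact d1
        rw [if_neg h3]
        by_cases h4 : i' = i0
        · exact absurd (h2.trans h4.symm) hii'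
        · rw [if_neg h4]; exact d2 i' h4 h3
      · rw [if_neg h2]
        by_cases h3 : i' = j
        · rw [if_pos h3]; exact (d3 i h1 h2).symm
        rw [if_neg h3]
        by_cases h4 : i' = i0
        · rw [if_pos h4]; exact (d2 i h2 h1).symm
        · rw [if_neg h4]; exact hdisj i i' hii'
  · -- v is unused: just replace e i0 by g0
    push_neg at hvj
    refine ⟨Function.update e i0 g0, ?_, ?_⟩
    · intro i
      by_cases hii0 : i = i0
      · rw [hii0, Function.update_self]; exact hg0F
      · rw [Function.update_of_ne hii0]; exact (hother i hii0).1
    · intro i i' hii'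
      have hgen : ∀ a, Function.update e i0 g0 a = if a = i0 then g0 else e a := by
        intro a
        by_cases h : a = i0
        · rw [h, Function.update_self, if_pos rfl]
        · rw [Function.update_of_ne h, if_neg h]
      rw [hgen, hgen, Finset.disjoint_left]
      intro x hx hx'
      by_cases h1 : i = i0 <;> by_cases h2 : i' = i0
      · exact hii' (h1.trans h2.symm)
      · rw [if_pos h1] at hx; rw [if_neg h2] at hx'
        rcases hg0sub x hx with rfl | hxe
        · exact hvj i' hx'
        · subst h1
          exact Finset.disjoint_left.1 (hdisj i i' (fun h => h2 h.symm)) hxe hx'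
      · rw [if_neg h1] at hx; rw [if_pos h2] at hx'
        rcases hg0sub x hx' with rfl | hxe
        · exact hvj i hx
        · subst h2
          exact Finset.disjoint_left.1 (hdisj i i' hii') hx hxe
      · rw [if_neg h1] at hx; rw [if_neg h2] at hx'
        exact Finset.disjoint_left.1 (hdisj i i' hii') hx hx'

/-- The key step: strictly decrease one element of `f` while still dominating `e`. -/
lemma domle_step {e f : Finset ℕ} (h : DomLE e f) (hne : e ≠ f) :
    ∃ u v, u ∈ e ∧ v ∈ f ∧ u < v ∧ u ∉ f ∧
      DomLE e (insert u (f.erase v)) ∧ ∑ x ∈ insert u (f.erase v), x < ∑ x ∈ f, x := by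
  classical
  set A := e.sort (· ≤ ·) with hA
  set B := f.sort (· ≤ ·) with hB
  have hlen : A.length = B.length := h.length_eq
  have hget : ∀ i (h1 : i < A.length) (h2 : i < B.length), A[i] ≤ B[i] :=
    fun i h1 h2 => (List.forall₂_iff_get.1 h).2 i h1 h2
  have hAB : A ≠ B := by
    intro hEq
    apply hne
    have := congrArg List.toFinset hEq
    rwa [hA, hB, Finset.sort_toFinset, Finset.sort_toFinset] at this
  have hAlt : ∀ p q (hp : p < A.length) (hq : q < A.length), p < q → A[p] < A[q] :=
    fun p q hp hq hpq => List.pairwise_iff_get.1 (Finset.sortedLT_sort e).pairwise ⟨p, hp⟩ ⟨q, hq⟩ hpq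
  have hBlt : ∀ p q (hp : p < B.length) (hq : q < B.length), p < q → B[p] < B[q] :=
    fun p q hp hq hpq => List.pairwise_iff_get.1 (Finset.sortedLT_sort f).pairwise ⟨p, hp⟩ ⟨q, hq⟩ hpq
  -- find least differing index
  have hex : ∃ j, j < A.length ∧ A.getD j 0 ≠ B.getD j 0 := by
    by_contra hc
    push_neg at hc
    apply hAB
    apply List.ext_getElem hlen
    intro i h1 h2
    have := hc i h1
    rwa [List.getD_eq_getElem _ _ h1, List.getD_eq_getElem _ _ h2] at this
  set j := Nat.find hex with hj
  obtain ⟨hjlen, hjne⟩ := Nat.find_spec hex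
  have hjmin : ∀ i (h1 : i < A.length) (h2 : i < B.length), i < j → A[i] = B[i] := by
    intro i h1 h2 hi
    have := Nat.find_min hex hi
    push_neg at this
    have := this h1
    rwa [List.getD_eq_getElem _ _ h1, List.getD_eq_getElem _ _ h2] at this
  have hjlenB : j < B.length := hlen ▸ hjlen
  set u := A[j]'hjlen with hu
  set v := B[j]'hjlenB with hv
  have hjne' : u ≠ v := by
    rw [hu, hv]
    rwa [List.getD_eq_getElem _ _ hjlen, List.getD_eq_getElem _ _ hjlenB] at hjne
  have huv : u < v := lt_of_le_of_ne (hget j hjlen hjlenB) hjne'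
  have hue : u ∈ e := by
    rw [← Finset.mem_sort (α := ℕ) (· ≤ ·), ← hA, hu]
    exact List.getElem_mem _
  have hvf : v ∈ f := by
    rw [← Finset.mem_sort (α := ℕ) (· ≤ ·), ← hB, hv]
    exact List.getElem_mem _
  have huf : u ∉ f := by
    rw [← Finset.mem_sort (α := ℕ) (· ≤ ·), ← hB]
    intro hmem
    obtain ⟨i, hi, hBi⟩ := List.mem_iff_getElem.1 hmem
    rcases lt_trichotomy i j with hij | hij | hij
    · have hiA : i < A.length := by omega
      have h1 : A[i] = B[i] := hjmin i hiA hi hij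
      have h2 : A[i] < A[j]'hjlen := hAlt i j hiA hjlen hij
      rw [← hu] at h2
      omega
    · apply hjne'
      rw [← hBi, hv]
      simp only [hij]
    · have h2 : B[j]'hjlenB < B[i] := hBlt j i hjlenB hi hij
      rw [← hv] at h2
      omega
  -- the new set and its sorted list
  set f' := insert u (f.erase v) with hf'
  have huev : u ∉ f.erase v := fun hh => huf (Finset.mem_of_mem_erase hh)
  have hsum : ∑ x ∈ f', x < ∑ x ∈ f, x := by
    rw [hf', Finset.sum_insert huev]
    calc u + ∑ x ∈ f.erase v, x < v + ∑ x ∈ f.erase v, x := by omega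
    _ = ∑ x ∈ f, x := Finset.add_sum_erase _ (fun x => x) hvf
  set C := B.set j u with hC
  have hClen : C.length = B.length := List.length_set ..
  have hCget : ∀ i (hi : i < C.length), C[i] = if i = j then u else B[i]'(hClen ▸ hi) := by
    intro i hi
    rcases eq_or_ne i j with rfl | hij
    · rw [if_pos rfl]; exact List.getElem_set_self _
    · rw [if_neg hij]; exact List.getElem_set_ne (Ne.symm hij) ..
  have hCsortlt : List.Pairwise (· < ·) C := by
    rw [List.pairwise_iff_get]
    rintro ⟨p, hp⟩ ⟨q, hq⟩ hpq
    have hpq' : p < q := hpq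
    have hpB : p < B.length := hClen ▸ hp
    have hqB : q < B.length := hClen ▸ hq
    show C[p] < C[q]
    rw [hCget p hp, hCget q hq]
    rcases eq_or_ne p j with hpj | hpj
    · rw [if_pos hpj, if_neg (by omega)]
      have h1 : B[j]'hjlenB < B[q]'hqB := hBlt j q hjlenB hqB (by omega)
      rw [← hv] at h1
      omega
    · rw [if_neg hpj]
      rcases eq_or_ne q j with hqj | hqj
      · rw [if_pos hqj]
        have hpA : p < A.length := by omega
        have h1 : A[p] = B[p] := hjmin p hpA hpB (by omega)
        have h2 : A[p] < A[j]'hjlen := hAlt p j hpA hjlen (by omega)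
        rw [← hu] at h2
        omega
      · rw [if_neg hqj]
        exact hBlt p q hpB hqB hpq'
  have hCnodup : C.Nodup := hCsortlt.nodup
  have hCmem : ∀ x, x ∈ C ↔ (x = u ∨ (x ∈ B ∧ x ≠ v)) := by
    intro x
    constructor
    · intro hx
      obtain ⟨i, hi, hxi⟩ := List.mem_iff_getElem.1 hx
      rw [hCget i hi] at hxi
      rcases eq_or_ne i j with rfl | hij
      · rw [if_pos rfl] at hxi; exact Or.inl hxi.symm
      · rw [if_neg hij] at hxi
        refine Or.inr ⟨hxi ▸ List.getElem_mem _, ?_⟩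
        intro hxv
        apply hij
        have h1 : B[i]'(hClen ▸ hi) = B[j]'hjlenB := by rw [hxi, hxv, hv]
        exact ((Finset.sort_nodup f (· ≤ ·)).getElem_inj_iff).1 h1
    · rintro (rfl | ⟨hxB, hxv⟩)
      · refine List.mem_iff_getElem.2 ⟨j, by omega, ?_⟩
        rw [hCget j (by omega), if_pos rfl]
      · obtain ⟨i, hi, hxi⟩ := List.mem_iff_getElem.1 hxB
        refine List.mem_iff_getElem.2 ⟨i, by omega, ?_⟩
        rw [hCget i (by omega), if_neg ?_]
        · exact hxi
        · rintro rfl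
          apply hxv
          rw [← hxi, hv]
  have hCfin : C.toFinset = f' := by
    apply Finset.ext
    intro x
    rw [List.mem_toFinset, hCmem, hf']
    simp only [Finset.mem_insert, Finset.mem_erase]
    constructor
    · rintro (rfl | ⟨hxB, hxv⟩)
      · exact Or.inl rfl
      · exact Or.inr ⟨hxv, by rwa [← Finset.mem_sort (α := ℕ) (· ≤ ·), ← hB]⟩
    · rintro (rfl | ⟨hxv, hxf⟩)
      · exact Or.inl rfl
      · exact Or.inr ⟨by rwa [hB, Finset.mem_sort], hxv⟩
  have hsortC : f'.sort (· ≤ ·) = C :=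
    (fun p s1 s2 => List.Perm.eq_of_pairwise' s1 s2 p)
      (List.perm_of_nodup_nodup_toFinset_eq (Finset.sort_nodup _ _) hCnodup
        (by rw [Finset.sort_toFinset, hCfin]))
      (Finset.pairwise_sort _ _) (hCsortlt.imp le_of_lt)
  refine ⟨u, v, hue, hvf, huv, huf, ?_, hsum⟩
  rw [DomLE, hsortC, ← hA]
  rw [List.forall₂_iff_get]
  refine ⟨by omega, ?_⟩
  intro i h1 h2
  show A[i]'h1 ≤ C[i]'h2
  rw [hCget i h2]
  rcases eq_or_ne i j with rfl | hij
  · rw [if_pos rfl, hu]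
  · rw [if_neg hij]
    exact hget i h1 (by omega)


lemma mem_of_fixed {u v : ℕ} {G : Finset (Finset ℕ)} (hfix : compUV u v G = G)
    {f : Finset ℕ} (hf : f ∈ G) (hv : v ∈ f) (hu : u ∉ f) : insert u (f.erase v) ∈ G := by
  by_cases hmem : insert u (f.erase v) ∈ G
  · exact hmem
  · exfalso
    apply hmem
    have h1 : shiftE u v f ∉ G := by rwa [shiftE_of_mem hv hu]
    have h2 : shiftE u v f ∈ compUV u v G := mem_compUV.2 (Or.inr ⟨f, hf, h1, rfl⟩)
    rwa [hfix, shiftE_of_mem hv hu] at h2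

lemma stable_of_fixed {n : ℕ} {G : Finset (Finset ℕ)} (hG : ∀ g ∈ G, g ⊆ Finset.Icc 1 n)
    (hfix : ∀ u v : ℕ, 1 ≤ u → v ≤ n → u < v → compUV u v G = G) : StableGraph n G := by
  suffices H : ∀ N, ∀ f : Finset ℕ, (∑ x ∈ f, x) ≤ N →
      ∀ e, e ⊆ Finset.Icc 1 n → DomLE e f → f ∈ G → e ∈ G by
    intro e f he hd hf
    exact H (∑ x ∈ f, x) f le_rfl e he hd hf
  intro N
  induction N with
  | zero =>
    intro f hfsum e he hd hf
    by_cases hef : e = f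
    · rwa [hef]
    · obtain ⟨u, v, -, hvf, huv, -, -, hlt⟩ := domle_step hd hef
      exfalso
      have : v ≤ ∑ x ∈ f, x :=
        Finset.single_le_sum (f := fun x => x) (fun _ _ => Nat.zero_le _) hvf
      omega
  | succ N ih =>
    intro f hfsum e he hd hf
    by_cases hef : e = f
    · rwa [hef]
    · obtain ⟨u, v, hue, hvf, huv, huf, hd', hlt⟩ := domle_step hd hef
      have hu1 : 1 ≤ u := (Finset.mem_Icc.1 (he hue)).1
      have hvn : v ≤ n := (Finset.mem_Icc.1 (hG f hf hvf)).2
      have hf' : insert u (f.erase v) ∈ G := mem_of_fixed (hfix u v hu1 hvn huv) hf hvf huf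
      exact ih (insert u (f.erase v)) (by omega) e he hd' hf'

lemma main_aux {n k m : ℕ} : ∀ N (F : Fin m → Finset (Finset ℕ)),
    (∑ i, wtG (F i)) = N → (∀ i, IsKGraphOn n k (F i)) → ¬ HasRainbowMatching F →
    ∃ F' : Fin m → Finset (Finset ℕ), (∀ i, IsKGraphOn n k (F' i)) ∧
      (∀ i, StableGraph n (F' i)) ∧ (∀ i, (F' i).card = (F i).card) ∧
      ¬ HasRainbowMatching F' := by
  intro N
  induction N using Nat.strong_induction_on with
  | _ N ih =>
    intro F hN hkF hno
    by_cases hfix : ∀ u v : ℕ, 1 ≤ u → v ≤ n → u < v → ∀ i, compUV u v (F i) = F i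
    · refine ⟨F, hkF, ?_, fun i => rfl, hno⟩
      intro i
      exact stable_of_fixed (fun g hg => (hkF i g hg).1)
        (fun u v h1 h2 h3 => hfix u v h1 h2 h3 i)
    · push_neg at hfix
      obtain ⟨u, v, hu1, hvn, huv, i0, hne⟩ := hfix
      have hlt : (∑ i, wtG (compUV u v (F i))) < N := by
        rw [← hN]
        apply Finset.sum_lt_sum
        · intro i _; exact wtG_compUV_le (le_of_lt huv) (F i)
        · exact ⟨i0, Finset.mem_univ _, wtG_compUV_lt huv hne⟩
      obtain ⟨F', h1, h2, h3, h4⟩ := ih _ hlt (fun i => compUV u v (F i)) rfl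
        (fun i => kgraph_compUV hu1 (by omega) (hkF i))
        (fun hr => hno (rainbow_of_compUV (Nat.ne_of_lt huv) F hr))
      exact ⟨F', h1, h2, fun i => (h3 i).trans (card_compUV u v (F i)), h4⟩

/-- one can pass to a stable family with the same sizes and
still no rainbow matching. -/
theorem exists_stable_family (n k m : ℕ) (hk : 0 < k) (hm : 0 < m) (hn : n ≥ k * m)
    (F : Fin m → Finset (Finset ℕ)) (hF : ∀ i, IsKGraphOn n k (F i))
    (hno : ¬ HasRainbowMatching F) :
    ∃ F' : Fin m → Finset (Finset ℕ), (∀ i, IsKGraphOn n k (F' i)) ∧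
      (∀ i, StableGraph n (F' i)) ∧ (∀ i, (F' i).card = (F i).card) ∧
      ¬ HasRainbowMatching F' := by
  exact main_aux (∑ i, wtG (F i)) F rfl hF hno
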